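/- For the Invincible Fighter (u = 1), for every integer s ≥ 1 the function t ↦ N(s,t) − N(s−1,t) is non-decreasing on [0,∞). -/

import Mathlib

open Real MeasureTheory Filter Topology

/-- Auxiliary history-based recursion: `Nhist a u n m t` equals `N(m,t)` when `m ≤ n`. -/
noncomputable def Nhist (a : ℕ → ℝ) (u : ℝ) : ℕ → ℕ → ℝ → ℝ
  | 0, _, _ => 0
  | n + 1, m, t =>
      if m ≤ n then Nhist a u n m t
      else (Finset.Icc 1 (n + 1)).sup'
          (Finset.nonempty_Icc.mpr (Nat.succ_le_succ (Nat.zero_le n)))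
          (fun j => a j + (a j * (1 - u) + u) *
            (Real.exp (-t) * ∫ x in (0:ℝ)..t, Nhist a u n (n + 1 - j) x * Real.exp x))

/-- `Nval a u n t` is `N(n,t)`, the optimal expected number of enemy planes shot down,
with `N(0,t) = 0` and `N(n,t) = max_{1 ≤ j ≤ n} N_n(j,t)`. -/
noncomputable def Nval (a : ℕ → ℝ) (u : ℝ) (n : ℕ) (t : ℝ) : ℝ :=
  Nhist a u n n t

/-- `Nstar a u r t` is `N*(r,t) = e^{-t} ∫_0^t N(r,x) e^x dx` (so `N*(0,t) = 0`). -/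
noncomputable def Nstar (a : ℕ → ℝ) (u : ℝ) (r : ℕ) (t : ℝ) : ℝ :=
  Real.exp (-t) * ∫ x in (0:ℝ)..t, Nval a u r x * Real.exp x

/-- `Nalloc a u n j t` is `N_n(j,t) = a(j) + c(j)·N*(n-j,t)` where `c(j) = a(j)(1-u)+u`. -/
noncomputable def Nalloc (a : ℕ → ℝ) (u : ℝ) (n j : ℕ) (t : ℝ) : ℝ :=
  a j + (a j * (1 - u) + u) * Nstar a u (n - j) t

/-- `Kopt a u n t = min { j ∈ {1,…,n} : N_n(j,t) = N(n,t) }`. -/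
noncomputable def Kopt (a : ℕ → ℝ) (u : ℝ) (n : ℕ) (t : ℝ) : ℕ :=
  sInf {j : ℕ | 1 ≤ j ∧ j ≤ n ∧ Nalloc a u n j t = Nval a u n t}

namespace IFaux

variable (a : ℕ → ℝ)

lemma Nhist_stable (u : ℝ) (n m : ℕ) (t : ℝ) (h : m ≤ n) :
    Nhist a u (n+1) m t = Nhist a u n m t := by
  rw [Nhist, if_pos h]

lemma Nhist_eq (u : ℝ) : ∀ n m : ℕ, m ≤ n → ∀ t, Nhist a u n m t = Nval a u m t := by
  intro n
  induction n with
  | zero =>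
    intro m hm t
    have : m = 0 := Nat.le_zero.mp hm
    subst this; rfl
  | succ n ih =>
    intro m hm t
    rcases Nat.lt_or_ge m (n+1) with h | h
    · have h' : m ≤ n := Nat.lt_succ_iff.mp h
      rw [Nhist_stable a u n m t h']
      exact ih m h' t
    · have : m = n + 1 := le_antisymm hm h
      subst this; rfl

lemma Nval_zero (u : ℝ) (t : ℝ) : Nval a u 0 t = 0 := rfl

lemma Nval_succ (u : ℝ) (n : ℕ) (t : ℝ) :
    Nval a u (n+1) t = (Finset.Icc 1 (n+1)).sup'
      (Finset.nonempty_Icc.mpr (Nat.succ_le_succ (Nat.zero_le n)))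
      (fun j => a j + (a j * (1 - u) + u) * Nstar a u (n + 1 - j) t) := by
  show Nhist a u (n+1) (n+1) t = _
  rw [Nhist, if_neg (by omega)]
  refine Finset.sup'_congr _ rfl (fun j hj => ?_)
  have hj1 : 1 ≤ j := (Finset.mem_Icc.mp hj).1
  have hx : ∀ x : ℝ, Nhist a u n (n + 1 - j) x = Nval a u (n + 1 - j) x :=
    fun x => Nhist_eq a u n _ (by omega) x
  simp only [hx, Nstar]

lemma Nval_succ_one (n : ℕ) (t : ℝ) :
    Nval a 1 (n+1) t = (Finset.Icc 1 (n+1)).sup'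
      (Finset.nonempty_Icc.mpr (Nat.succ_le_succ (Nat.zero_le n)))
      (fun j => a j + Nstar a 1 (n + 1 - j) t) := by
  rw [Nval_succ]
  refine Finset.sup'_congr _ rfl (fun j hj => ?_)
  ring_nf

lemma Nstar_zero (u : ℝ) (t : ℝ) : Nstar a u 0 t = 0 := by
  have : ∀ x : ℝ, Nval a u 0 x * Real.exp x = 0 := fun x => by
    rw [Nval_zero, zero_mul]
  simp only [Nstar, this, intervalIntegral.integral_zero, mul_zero]

lemma Nval_one (t : ℝ) : Nval a 1 1 t = a 1 := by
  rw [Nval_succ_one]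
  simp [Nstar_zero]

lemma continuous_finset_sup' {ι : Type*} (s : Finset ι) (hs : s.Nonempty) (f : ι → ℝ → ℝ)
    (hf : ∀ i ∈ s, Continuous (f i)) :
    Continuous fun t => s.sup' hs (fun i => f i t) := by
  induction hs using Finset.Nonempty.cons_induction with
  | singleton i => simpa using hf i (Finset.mem_singleton_self i)
  | cons i s hi hne ih =>
    have e : (fun t => (Finset.cons i s hi).sup' (Finset.cons_nonempty hi) fun j => f j t)
        = fun t => max (f i t) (s.sup' hne fun j => f j t) :=
      funext fun t => Finset.sup'_cons hne (fun j => f j t)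
    rw [e]
    exact (hf i (Finset.mem_cons_self i s)).max
      (ih fun j hj => hf j (Finset.mem_cons_of_mem hj))

lemma continuous_Nval (u : ℝ) : ∀ n, Continuous (Nval a u n) := by
  intro n
  induction n using Nat.strong_induction_on with
  | _ n ih =>
    match n with
    | 0 => exact continuous_const
    | Nat.succ n =>
      have e : Nval a u (n+1) = fun t => (Finset.Icc 1 (n+1)).sup'
          (Finset.nonempty_Icc.mpr (Nat.succ_le_succ (Nat.zero_le n)))
          (fun j => a j + (a j * (1 - u) + u) * Nstar a u (n + 1 - j) t) :=
        funext (Nval_succ a u n)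
      rw [e]
      apply continuous_finset_sup'
      intro j hj
      have hj1 : 1 ≤ j := (Finset.mem_Icc.mp hj).1
      have hc : Continuous (Nval a u (n + 1 - j)) := ih _ (by omega)
      have hst : Continuous (Nstar a u (n + 1 - j)) :=
        (Real.continuous_exp.comp continuous_neg).mul
          (intervalIntegral.continuous_primitive
            (fun c d => ((hc.mul Real.continuous_exp).intervalIntegrable c d)) 0)
      exact continuous_const.add (continuous_const.mul hst)

lemma continuous_Nstar (u : ℝ) (r : ℕ) : Continuous (Nstar a u r) :=
  (Real.continuous_exp.comp continuous_neg).mul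
    (intervalIntegral.continuous_primitive
      (fun c d => (((continuous_Nval a u r).mul Real.continuous_exp).intervalIntegrable c d)) 0)

lemma intInt (u : ℝ) (r : ℕ) (c d : ℝ) :
    IntervalIntegrable (fun x => Nval a u r x * Real.exp x) volume c d :=
  ((continuous_Nval a u r).mul Real.continuous_exp).intervalIntegrable c d


variable (haI : ∀ j, a j ∈ Set.Icc (0:ℝ) 1)

lemma Nstar_mono_step (r : ℕ) (hr : ∀ x, 0 ≤ x → Nval a 1 r x ≤ Nval a 1 (r+1) x)
    (t : ℝ) (ht : 0 ≤ t) : Nstar a 1 r t ≤ Nstar a 1 (r+1) t := by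
  unfold Nstar
  refine mul_le_mul_of_nonneg_left ?_ (exp_pos _).le
  refine intervalIntegral.integral_mono_on ht (intInt a 1 r 0 t) (intInt a 1 (r+1) 0 t)
    (fun x hx => mul_le_mul_of_nonneg_right (hr x hx.1) (exp_pos x).le)

include haI in
lemma Nval_le_succ : ∀ n, ∀ t, 0 ≤ t → Nval a 1 n t ≤ Nval a 1 (n+1) t := by
  intro n
  induction n using Nat.strong_induction_on with
  | _ n ih =>
    match n with
    | 0 =>
      intro t ht
      rw [Nval_zero, Nval_one]
      exact (haI 1).1
    | Nat.succ n =>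
      intro t ht
      rw [Nval_succ_one a n, Nval_succ_one a (n+1)]
      apply Finset.sup'_le
      intro j hj
      obtain ⟨hj1, hj2⟩ := Finset.mem_Icc.mp hj
      have hmem : j ∈ Finset.Icc 1 (n+2) := Finset.mem_Icc.mpr ⟨hj1, by omega⟩
      refine le_trans ?_ (Finset.le_sup' (fun j => a j + Nstar a 1 (n + 2 - j) t) hmem)
      have e : n + 2 - j = (n + 1 - j) + 1 := by omega
      rw [e]
      have := Nstar_mono_step a (n+1-j) (fun x hx => ih (n+1-j) (by omega) x hx) t ht
      linarith

include haI in
lemma Nval_nonneg (n : ℕ) (t : ℝ) (ht : 0 ≤ t) : 0 ≤ Nval a 1 n t := by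
  induction n with
  | zero => rw [Nval_zero]
  | succ n ihn => exact le_trans ihn (Nval_le_succ a haI n t ht)

lemma Nstar_nonneg (r : ℕ) (hr : ∀ x, 0 ≤ x → 0 ≤ Nval a 1 r x) (t : ℝ) (ht : 0 ≤ t) :
    0 ≤ Nstar a 1 r t := by
  unfold Nstar
  refine mul_nonneg (exp_pos _).le ?_
  exact intervalIntegral.integral_nonneg ht (fun x hx => mul_nonneg (hr x hx.1) (exp_pos x).le)

lemma Nstar_le_of (r : ℕ) (B : ℝ) (hB : 0 ≤ B)
    (h : ∀ x, 0 ≤ x → Nval a 1 r x ≤ B) (t : ℝ) (ht : 0 ≤ t) :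
    Nstar a 1 r t ≤ B := by
  unfold Nstar
  have h1 : (∫ x in (0:ℝ)..t, Nval a 1 r x * Real.exp x) ≤ ∫ x in (0:ℝ)..t, B * Real.exp x :=
    intervalIntegral.integral_mono_on ht (intInt a 1 r 0 t)
      ((continuous_const.mul Real.continuous_exp).intervalIntegrable 0 t)
      (fun x hx => mul_le_mul_of_nonneg_right (h x hx.1) (exp_pos x).le)
  have h2 : (∫ x in (0:ℝ)..t, B * Real.exp x) = B * (Real.exp t - 1) := by
    rw [intervalIntegral.integral_const_mul, integral_exp, Real.exp_zero]
  have h3 : Real.exp (-t) * (B * (Real.exp t - 1)) = B * (1 - Real.exp (-t)) := by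
    have : Real.exp (-t) * Real.exp t = 1 := by rw [← Real.exp_add]; simp
    ring_nf
    nlinarith [this]
  calc Real.exp (-t) * (∫ x in (0:ℝ)..t, Nval a 1 r x * Real.exp x)
      ≤ Real.exp (-t) * (B * (Real.exp t - 1)) := by
        rw [← h2] at *; exact mul_le_mul_of_nonneg_left h1 (exp_pos _).le
    _ = B * (1 - Real.exp (-t)) := h3
    _ ≤ B := by nlinarith [(exp_pos (-t)).le, hB]

include haI in
lemma Nval_le_nat : ∀ n, ∀ t, 0 ≤ t → Nval a 1 n t ≤ (n : ℝ) := by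
  intro n
  induction n using Nat.strong_induction_on with
  | _ n ih =>
    match n with
    | 0 => intro t ht; rw [Nval_zero]; simp
    | Nat.succ n =>
      intro t ht
      rw [Nval_succ_one a n]
      apply Finset.sup'_le
      intro j hj
      obtain ⟨hj1, hj2⟩ := Finset.mem_Icc.mp hj
      have h1 : Nstar a 1 (n+1-j) t ≤ ((n+1-j : ℕ) : ℝ) :=
        Nstar_le_of a (n+1-j) _ (Nat.cast_nonneg _) (fun x hx => ih (n+1-j) (by omega) x hx) t ht
      have h2 : a j ≤ 1 := (haI j).2
      have h3 : ((n+1-j:ℕ):ℝ) ≤ (n:ℝ) := by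
        have : (n+1-j:ℕ) ≤ n := by omega
        exact_mod_cast this
      push_cast
      linarith

lemma exists_max (n : ℕ) (t : ℝ) :
    ∃ K, 1 ≤ K ∧ K ≤ n+1 ∧ Nval a 1 (n+1) t = a K + Nstar a 1 (n+1-K) t ∧
      ∀ j, 1 ≤ j → j ≤ n+1 → a j + Nstar a 1 (n+1-j) t ≤ Nval a 1 (n+1) t := by
  rw [Nval_succ_one]
  obtain ⟨K, hK, hval⟩ := Finset.exists_mem_eq_sup'
    (Finset.nonempty_Icc.mpr (Nat.succ_le_succ (Nat.zero_le n)))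
    (fun j => a j + Nstar a 1 (n + 1 - j) t)
  obtain ⟨hK1, hK2⟩ := Finset.mem_Icc.mp hK
  refine ⟨K, hK1, hK2, hval, fun j h1 h2 => ?_⟩
  exact Finset.le_sup' (fun j => a j + Nstar a 1 (n + 1 - j) t) (Finset.mem_Icc.mpr ⟨h1, h2⟩)

lemma key_mono (f : ℝ → ℝ) (hf : Continuous f) (h0 : ∀ x, 0 ≤ x → 0 ≤ f x)
    (hm : ∀ x y, 0 ≤ x → x ≤ y → f x ≤ f y)
    {t1 t2 : ℝ} (h1 : 0 ≤ t1) (h12 : t1 ≤ t2) :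
    Real.exp (-t1) * ∫ x in (0:ℝ)..t1, f x * Real.exp x ≤
      Real.exp (-t2) * ∫ x in (0:ℝ)..t2, f x * Real.exp x := by
  have hint : ∀ c d : ℝ, IntervalIntegrable (fun x => f x * Real.exp x) volume c d :=
    fun c d => (hf.mul Real.continuous_exp).intervalIntegrable c d
  have hsplit : (∫ x in (0:ℝ)..t2, f x * Real.exp x) =
      (∫ x in (0:ℝ)..t1, f x * Real.exp x) + ∫ x in t1..t2, f x * Real.exp x :=
    (intervalIntegral.integral_add_adjacent_intervals (hint 0 t1) (hint t1 t2)).symm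
  have hI1 : (∫ x in (0:ℝ)..t1, f x * Real.exp x) ≤ f t1 * (Real.exp t1 - 1) := by
    calc (∫ x in (0:ℝ)..t1, f x * Real.exp x) ≤ ∫ x in (0:ℝ)..t1, f t1 * Real.exp x :=
          intervalIntegral.integral_mono_on h1 (hint 0 t1)
            ((continuous_const.mul Real.continuous_exp).intervalIntegrable 0 t1)
            (fun x hx => mul_le_mul_of_nonneg_right (hm x t1 hx.1 hx.2) (exp_pos x).le)
      _ = f t1 * (Real.exp t1 - 1) := by
          rw [intervalIntegral.integral_const_mul, integral_exp, Real.exp_zero]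
  have hI2 : f t1 * (Real.exp t2 - Real.exp t1) ≤ ∫ x in t1..t2, f x * Real.exp x := by
    calc f t1 * (Real.exp t2 - Real.exp t1)
        = ∫ x in t1..t2, f t1 * Real.exp x := by
          rw [intervalIntegral.integral_const_mul, integral_exp]
      _ ≤ _ :=
          intervalIntegral.integral_mono_on h12
            ((continuous_const.mul Real.continuous_exp).intervalIntegrable t1 t2) (hint t1 t2)
            (fun x hx => mul_le_mul_of_nonneg_right (hm t1 x h1 hx.1) (exp_pos x).le)
  have hI1nonneg : 0 ≤ ∫ x in (0:ℝ)..t1, f x * Real.exp x :=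
    intervalIntegral.integral_nonneg h1 (fun x hx => mul_nonneg (h0 x hx.1) (exp_pos x).le)
  rw [hsplit, mul_add]
  have hft1 : 0 ≤ f t1 := h0 t1 h1
  have e1 : Real.exp (-t1) * Real.exp t1 = 1 := by rw [← Real.exp_add]; simp
  have e2 : Real.exp (-t2) * Real.exp t2 = 1 := by rw [← Real.exp_add]; simp
  have eb : Real.exp (-t2) ≤ Real.exp (-t1) := Real.exp_le_exp.mpr (by linarith)
  have k1 := mul_le_mul_of_nonneg_left hI2 (exp_pos (-t2)).le
  have k2 := mul_le_mul_of_nonneg_right hI1 (sub_nonneg.mpr eb)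
  have k3 := mul_le_mul_of_nonneg_right hI1nonneg (sub_nonneg.mpr eb)
  nlinarith [k1, k2, k3, mul_nonneg hft1 (sub_nonneg.mpr eb)]

lemma Nstar_sub (r : ℕ) (t : ℝ) :
    Nstar a 1 (r+1) t - Nstar a 1 r t =
      Real.exp (-t) * ∫ x in (0:ℝ)..t, (Nval a 1 (r+1) x - Nval a 1 r x) * Real.exp x := by
  unfold Nstar
  rw [← mul_sub, ← intervalIntegral.integral_sub (intInt a 1 (r+1) 0 t) (intInt a 1 r 0 t)]
  congr 1
  refine intervalIntegral.integral_congr (fun x _ => ?_)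
  ring

include haI in
lemma Phi_mono (n : ℕ)
    (IH : ∀ r, r < n → MonotoneOn (fun t => Nval a 1 (r+1) t - Nval a 1 r t) (Set.Ici (0:ℝ)))
    {t1 t2 : ℝ} (h1 : 0 ≤ t1) (h12 : t1 ≤ t2) :
    ∀ r' r, r' ≤ r → r ≤ n →
      Nstar a 1 r' t2 - Nstar a 1 r' t1 ≤ Nstar a 1 r t2 - Nstar a 1 r t1 := by
  intro r' r hrr
  induction r, hrr using Nat.le_induction with
  | base => intro _; exact le_refl _
  | succ r hr ihr =>
    intro hrn
    refine le_trans (ihr (by omega)) ?_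
    have hstep : Nstar a 1 r t2 - Nstar a 1 r t1 ≤
        Nstar a 1 (r+1) t2 - Nstar a 1 (r+1) t1 := by
      have hd : ∀ s s' : ℝ, 0 ≤ s → s ≤ s' →
          Nval a 1 (r+1) s - Nval a 1 r s ≤ Nval a 1 (r+1) s' - Nval a 1 r s' :=
        fun s s' hs hss' => IH r (by omega) (Set.mem_Ici.mpr hs)
          (Set.mem_Ici.mpr (le_trans hs hss')) hss'
      have := key_mono (fun x => Nval a 1 (r+1) x - Nval a 1 r x)
        ((continuous_Nval a 1 (r+1)).sub (continuous_Nval a 1 r))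
        (fun x hx => sub_nonneg.mpr (Nval_le_succ a haI r x hx))
        hd h1 h12
      rw [← Nstar_sub, ← Nstar_sub] at this
      linarith
    linarith

lemma Nstar_lip (r : ℕ) (B : ℝ) (hB : 0 ≤ B)
    (hub : ∀ x, 0 ≤ x → Nval a 1 r x ≤ B) (hlb : ∀ x, 0 ≤ x → 0 ≤ Nval a 1 r x)
    (t δ : ℝ) (ht : 0 ≤ t) (hδ : 0 ≤ δ) :
    |Nstar a 1 r (t + δ) - Nstar a 1 r t| ≤ B * δ := by
  have hint := intInt a 1 r
  have hsplit : (∫ x in (0:ℝ)..(t+δ), Nval a 1 r x * Real.exp x) =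
      (∫ x in (0:ℝ)..t, Nval a 1 r x * Real.exp x) +
        ∫ x in t..(t+δ), Nval a 1 r x * Real.exp x :=
    (intervalIntegral.integral_add_adjacent_intervals (hint 0 t) (hint t (t+δ))).symm
  have hI0 : 0 ≤ ∫ x in (0:ℝ)..t, Nval a 1 r x * Real.exp x :=
    intervalIntegral.integral_nonneg ht (fun x hx => mul_nonneg (hlb x hx.1) (exp_pos x).le)
  have hI0ub : (∫ x in (0:ℝ)..t, Nval a 1 r x * Real.exp x) ≤ B * (Real.exp t - 1) := by
    calc (∫ x in (0:ℝ)..t, Nval a 1 r x * Real.exp x) ≤ ∫ x in (0:ℝ)..t, B * Real.exp x :=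
          intervalIntegral.integral_mono_on ht (hint 0 t)
            ((continuous_const.mul Real.continuous_exp).intervalIntegrable 0 t)
            (fun x hx => mul_le_mul_of_nonneg_right (hub x hx.1) (exp_pos x).le)
      _ = B * (Real.exp t - 1) := by
          rw [intervalIntegral.integral_const_mul, integral_exp, Real.exp_zero]
  have hJ0 : 0 ≤ ∫ x in t..(t+δ), Nval a 1 r x * Real.exp x :=
    intervalIntegral.integral_nonneg (by linarith)
      (fun x hx => mul_nonneg (hlb x (by linarith [hx.1])) (exp_pos x).le)
  have hJub : (∫ x in t..(t+δ), Nval a 1 r x * Real.exp x) ≤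
      B * (Real.exp (t+δ) - Real.exp t) := by
    calc (∫ x in t..(t+δ), Nval a 1 r x * Real.exp x) ≤ ∫ x in t..(t+δ), B * Real.exp x :=
          intervalIntegral.integral_mono_on (by linarith) (hint t (t+δ))
            ((continuous_const.mul Real.continuous_exp).intervalIntegrable t (t+δ))
            (fun x hx => mul_le_mul_of_nonneg_right (hub x (by linarith [hx.1])) (exp_pos x).le)
      _ = B * (Real.exp (t+δ) - Real.exp t) := by
          rw [intervalIntegral.integral_const_mul, integral_exp]
  have e1 : Real.exp (-t) * Real.exp t = 1 := by rw [← Real.exp_add]; simp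
  have e2 : Real.exp (-(t+δ)) * Real.exp (t+δ) = 1 := by
    rw [← Real.exp_add, show -(t+δ) + (t+δ) = 0 by ring, Real.exp_zero]
  have e3 : Real.exp (-(t+δ)) * Real.exp t = Real.exp (-δ) := by
    rw [← Real.exp_add, show -(t+δ) + t = -δ by ring]
  have e4 : 1 - Real.exp (-δ) ≤ δ := by nlinarith [Real.add_one_le_exp (-δ)]
  have e5 : 0 ≤ Real.exp (-δ) := (exp_pos _).le
  have e6 : Real.exp (-δ) ≤ 1 := Real.exp_le_one_iff.mpr (by linarith)
  have eb : Real.exp (-(t+δ)) ≤ Real.exp (-t) := Real.exp_le_exp.mpr (by linarith)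
  unfold Nstar
  rw [hsplit, abs_le]
  constructor
  · -- lower bound: Φ ≥ (e^{-t'} - e^{-t}) * I0 ≥ -B*δ
    have h1 : Real.exp (-(t+δ)) * (∫ x in t..(t+δ), Nval a 1 r x * Real.exp x) ≥ 0 :=
      mul_nonneg (exp_pos _).le hJ0
    have h2 : (Real.exp (-t) - Real.exp (-(t+δ))) *
        (∫ x in (0:ℝ)..t, Nval a 1 r x * Real.exp x) ≤
        (Real.exp (-t) - Real.exp (-(t+δ))) * (B * (Real.exp t - 1)) :=
      mul_le_mul_of_nonneg_left hI0ub (sub_nonneg.mpr eb)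
    -- (e^{-t} - e^{-t'})*(B(e^t - 1)) = B*(1 - e^{-δ} - e^{-t} + e^{-t'}) ≤ B*(1-e^{-δ}) ≤ Bδ
    nlinarith [mul_nonneg hB (sub_nonneg.mpr eb), mul_nonneg hB (by linarith : (0:ℝ) ≤ 1 - Real.exp (-δ)),
      mul_le_mul_of_nonneg_left e4 hB]
  · have h1 : Real.exp (-(t+δ)) * (∫ x in t..(t+δ), Nval a 1 r x * Real.exp x) ≤
        Real.exp (-(t+δ)) * (B * (Real.exp (t+δ) - Real.exp t)) :=
      mul_le_mul_of_nonneg_left hJub (exp_pos _).le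
    have h2 : (Real.exp (-(t+δ)) - Real.exp (-t)) *
        (∫ x in (0:ℝ)..t, Nval a 1 r x * Real.exp x) ≤ 0 :=
      mul_nonpos_of_nonpos_of_nonneg (by linarith) hI0
    nlinarith [mul_le_mul_of_nonneg_left e4 hB]

lemma monotoneOn_of_steps (h : ℝ → ℝ) (δ0 : ℝ) (hδ0 : 0 < δ0)
    (H : ∀ t, 0 ≤ t → ∀ δ, 0 ≤ δ → δ ≤ δ0 → h t ≤ h (t + δ)) :
    MonotoneOn h (Set.Ici (0:ℝ)) := by
  intro t1 h1 t2 h2 h12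
  simp only [Set.mem_Ici] at h1 h2
  obtain ⟨m, hm⟩ := exists_nat_ge ((t2 - t1) / δ0)
  have hm1 : (0:ℝ) < (m:ℝ) + 1 := by positivity
  set s := (t2 - t1) / ((m:ℝ) + 1) with hs
  have hs0 : 0 ≤ s := div_nonneg (by linarith) hm1.le
  have hsδ : s ≤ δ0 := by
    rw [hs, div_le_iff₀ hm1]
    calc t2 - t1 = ((t2-t1)/δ0) * δ0 := by field_simp
      _ ≤ ((m:ℝ)+1) * δ0 := mul_le_mul_of_nonneg_right (by linarith) hδ0.le
      _ = δ0 * ((m:ℝ)+1) := by ring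
  have key : ∀ i : ℕ, h t1 ≤ h (t1 + (i:ℝ) * s) := by
    intro i
    induction i with
    | zero => simp
    | succ i ihi =>
      have ht' : 0 ≤ t1 + (i:ℝ) * s := by positivity
      have hstep := H (t1 + (i:ℝ)*s) ht' s hs0 hsδ
      have e : t1 + (i:ℝ)*s + s = t1 + ((i:ℕ)+1:ℝ)*s := by push_cast; ring
      rw [e] at hstep
      refine le_trans ihi (le_trans hstep (le_of_eq ?_))
      push_cast; ring_nf
  have hfin := key (m+1)
  have e2 : t1 + ((m+1:ℕ):ℝ) * s = t2 := by
    rw [hs]; push_cast; field_simp; ring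
  rwa [e2] at hfin

include haI in
lemma Dmono (hconc : ∀ j : ℕ, a (j + 2) - a (j + 1) < a (j + 1) - a j) :
    ∀ n : ℕ, MonotoneOn (fun t => Nval a 1 (n+1) t - Nval a 1 n t) (Set.Ici (0:ℝ)) := by
  intro n
  induction n using Nat.strong_induction_on with
  | _ n ih =>
    match n with
    | 0 =>
      intro t1 h1 t2 h2 h12
      show Nval a 1 1 t1 - Nval a 1 0 t1 ≤ Nval a 1 1 t2 - Nval a 1 0 t2
      rw [Nval_one, Nval_one, Nval_zero, Nval_zero]
    | Nat.succ m =>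
      set b : ℕ → ℝ := fun j => a (j+1) - a j with hb
      have hanti : StrictAnti b := strictAnti_nat_of_succ_lt (fun j => hconc j)
      have hne : (Finset.Icc 1 (m+1)).Nonempty := Finset.nonempty_Icc.mpr (by omega)
      set β := (Finset.Icc 1 (m+1)).inf' hne (fun i => b i - b (i+1)) with hβ
      have hβpos : 0 < β := by
        rw [hβ, Finset.lt_inf'_iff]
        intro i _
        exact sub_pos.mpr (hanti (Nat.lt_succ_self i))
      set C : ℝ := ((m:ℝ) + 2) with hC
      have hCpos : (0:ℝ) < C := by rw [hC]; positivity
      set δ0 := β / (2*C + 1) with hδ0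
      have hδ0pos : 0 < δ0 := by rw [hδ0]; positivity
      have hδ0eq : (2*C+1) * δ0 = β := by
        rw [hδ0]; field_simp
      apply monotoneOn_of_steps _ δ0 hδ0pos
      intro t ht δ hd0 hdδ0
      obtain ⟨K, hK1, hK2, hKval, hKub⟩ := exists_max a (m+1) t
      obtain ⟨K', hK'1, hK'2, hK'val, hK'ub⟩ := exists_max a m (t+δ)
      obtain ⟨_, _, _, _, hub2⟩ := exists_max a (m+1) (t+δ)
      obtain ⟨_, _, _, _, hub3⟩ := exists_max a m t
      have hlip : ∀ r : ℕ, r ≤ m+1 → |Nstar a 1 r (t+δ) - Nstar a 1 r t| ≤ C * δ := by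
        intro r hr
        have hub' : ∀ x, 0 ≤ x → Nval a 1 r x ≤ C := by
          intro x hx
          refine le_trans (Nval_le_nat a haI r x hx) ?_
          rw [hC]
          have : (r:ℝ) ≤ (m:ℝ) + 1 := by exact_mod_cast hr
          linarith
        exact Nstar_lip a r C hCpos.le hub' (fun x hx => Nval_nonneg a haI r x hx) t δ ht hd0
      have hKK' : K ≤ K' + 1 := by
        by_contra hcon
        push_neg at hcon
        have h1 := hKub (K'+1) (by omega) (by omega)
        have h2 := hK'ub (K-1) (by omega) (by omega)
        rw [hKval] at h1
        rw [hK'val] at h2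
        rw [show m + 1 + 1 - (K'+1) = m + 1 - K' from by omega] at h1
        rw [show m + 1 - (K-1) = m + 1 + 1 - K from by omega] at h2
        have hbb : b (K-1) ≤ b (K'+1) := hanti.antitone (by omega)
        have hgap : β ≤ b K' - b (K'+1) := by
          rw [hβ]
          exact Finset.inf'_le (fun i => b i - b (i+1)) (Finset.mem_Icc.mpr ⟨hK'1, hK'2⟩)
        have ebK : b (K-1) = a K - a (K-1) := by
          show a (K - 1 + 1) - a (K - 1) = a K - a (K - 1)
          rw [show K - 1 + 1 = K from by omega]
        have ebK' : b K' = a (K'+1) - a K' := rfl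
        have hl1 := abs_le.mp (hlip (m+1+1-K) (by omega))
        have hl2 := abs_le.mp (hlip (m+1-K') (by omega))
        have h2Cδ : 2*C*δ ≤ 2*C*δ0 := by nlinarith [hCpos]
        linarith [hl1.1, hl2.2, hδ0eq, hβpos, hδ0pos]
      have hPhi := Phi_mono a haI (m+1) (fun r hr => ih r (by omega)) ht
        (by linarith : t ≤ t + δ) (m+1-K') (m+1+1-K) (by omega) (by omega)
      have g1 : a K + Nstar a 1 (m+1+1-K) (t+δ) ≤ Nval a 1 (m+1+1) (t+δ) := hub2 K hK1 hK2
      have g2 : a K' + Nstar a 1 (m+1-K') t ≤ Nval a 1 (m+1) t := hub3 K' hK'1 hK'2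
      rw [hKval, hK'val]
      linarith [hPhi, g1, g2]

end IFaux

/-- For the Invincible Fighter (`u = 1`), for every `s ≥ 1` the function
`t ↦ N(s,t) - N(s-1,t)` is non-decreasing on `[0,∞)`. -/
theorem invincible_diff_monotone
    (a : ℕ → ℝ) (haI : ∀ j, a j ∈ Set.Icc (0:ℝ) 1) (ha0 : a 0 = 0)
    (hmono : StrictMono a)
    (hconc : ∀ j : ℕ, a (j + 2) - a (j + 1) < a (j + 1) - a j) :
    ∀ s : ℕ, 1 ≤ s →
      MonotoneOn (fun t => Nval a 1 s t - Nval a 1 (s - 1) t) (Set.Ici (0:ℝ)) := by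
  intro s hs
  obtain ⟨n, rfl⟩ : ∃ n, s = n + 1 := ⟨s - 1, by omega⟩
  simpa using IFaux.Dmono a haI hconc n
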